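/- Let φ(x) = ½xᵀQx + qᵀx with Q symmetric with spectrum in [m, L], 0 < m ≤ L, and g proper closed convex, γ ∈ (0, 1/L). Then the forward-backward envelope M(x) = φ(x) − (γ/2)‖∇φ(x)‖² + g^γ(x − γ∇φ(x)) is convex; more precisely the smooth part x ↦ φ(x) − (γ/2)‖Qx + q‖² is m(1 − γL)-strongly convex, and z ↦ g^γ applied to the affine map x ↦ (I − γQ)x − γq is convex. -/

import Mathlib

local notation "⟪" x ", " y "⟫" => @inner ℝ _ _ x y

section Aux

variable {E : Type*} [NormedAddCommGroup E] [InnerProductSpace ℝ E]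

/-- Quadratic-form identity for convex combinations, for symmetric operators. -/
lemma aux_quad_comb (A : E →L[ℝ] E) (hA : ∀ u v : E, ⟪A u, v⟫ = ⟪u, A v⟫)
    (x y : E) (a b : ℝ) (hab : a + b = 1) :
    ⟪a • x + b • y, A (a • x + b • y)⟫
      = a * ⟪x, A x⟫ + b * ⟪y, A y⟫ - a * b * ⟪x - y, A (x - y)⟫ := by
  have h1 : ⟪y, A x⟫ = ⟪x, A y⟫ := by rw [real_inner_comm, hA]
  have hb : b = 1 - a := by linarith
  subst hb
  simp only [map_add, map_smul, map_sub, inner_add_left, inner_add_right,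
    inner_sub_left, inner_sub_right, real_inner_smul_left, real_inner_smul_right]
  rw [h1]; ring

lemma aux_sq_bound (Q : E →L[ℝ] E) (m L : ℝ)
    (hA : ∀ u v : E, ⟪Q u, v⟫ = ⟪u, Q v⟫)
    (hlow : ∀ x : E, m * ‖x‖ ^ 2 ≤ ⟪x, Q x⟫)
    (hupp : ∀ x : E, ⟪x, Q x⟫ ≤ L * ‖x‖ ^ 2)
    (x : E) : ‖Q x‖ ^ 2 ≤ (m + L) * ⟪x, Q x⟫ - m * L * ‖x‖ ^ 2 := by
  set u : E := Q x - m • x with hu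
  have hAx : ⟪x, u⟫ = ⟪x, Q x⟫ - m * ‖x‖ ^ 2 := by
    simp [hu, inner_sub_right, real_inner_smul_right, real_inner_self_eq_norm_sq]
  have hApos : 0 ≤ ⟪x, u⟫ := by rw [hAx]; linarith [hlow x]
  have huAu : ⟪u, Q u⟫ - m * ‖u‖ ^ 2 ≤ (L - m) * ‖u‖ ^ 2 := by
    have := hupp u; linarith
  have hux : ⟪u, x⟫ = ⟪x, u⟫ := real_inner_comm _ _
  have hQxu : ⟪x, Q u⟫ = ‖u‖ ^ 2 + m * ⟪x, u⟫ := by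
    have h1 : ⟪Q x, u⟫ = ⟪x, Q u⟫ := hA x u
    have h2 : ⟪Q x, u⟫ = ⟪u, u⟫ + m * ⟪x, u⟫ := by
      have : Q x = u + m • x := by rw [hu]; abel
      rw [this, inner_add_left, real_inner_smul_left]
    rw [← h1, h2, real_inner_self_eq_norm_sq]
  have hq : ∀ t : ℝ, 0 ≤ ((L - m) * ‖u‖ ^ 2) * (t * t) + (-(2 * ‖u‖ ^ 2)) * t + ⟪x, u⟫ := by
    intro t
    have h0 := hlow (x - t • u)
    have hexp : ⟪x - t • u, Q (x - t • u)⟫ - m * ‖x - t • u‖ ^ 2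
        = ⟪x, u⟫ - 2 * t * ‖u‖ ^ 2 + t * t * (⟪u, Q u⟫ - m * ‖u‖ ^ 2) := by
      rw [← real_inner_self_eq_norm_sq]
      simp only [map_sub, map_smul, inner_sub_left, inner_sub_right,
        real_inner_smul_left, real_inner_smul_right]
      have h3 : ⟪u, Q x⟫ = ‖u‖ ^ 2 + m * ⟪x, u⟫ := by
        rw [real_inner_comm, hA, hQxu]
      rw [h3, hQxu, hAx, hux]
      linear_combination (t * m) * hAx - m * real_inner_self_eq_norm_sq x
        - (t ^ 2 * m) * real_inner_self_eq_norm_sq u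
    nlinarith [h0, hexp, mul_le_mul_of_nonneg_left huAu (mul_self_nonneg t)]
  have hdisc := discrim_le_zero hq
  rw [discrim] at hdisc
  have hkey : ‖u‖ ^ 2 ≤ (L - m) * ⟪x, u⟫ := by
    rcases eq_or_ne (‖u‖ ^ 2) 0 with h | h
    · have hu0 : u = 0 := by
        rwa [pow_eq_zero_iff (by norm_num), norm_eq_zero] at h
      simp [hu0, h]
    · have hpos : 0 < ‖u‖ ^ 2 := lt_of_le_of_ne (by positivity) (Ne.symm h)
      nlinarith [hdisc]
  have hexp2 : ‖u‖ ^ 2 = ‖Q x‖ ^ 2 - 2 * m * ⟪x, Q x⟫ + m ^ 2 * ‖x‖ ^ 2 := by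
    rw [← real_inner_self_eq_norm_sq u, hu]
    simp only [inner_sub_left, inner_sub_right, real_inner_smul_left, real_inner_smul_right]
    have : ⟪Q x, x⟫ = ⟪x, Q x⟫ := real_inner_comm _ _
    rw [this, ← real_inner_self_eq_norm_sq x, ← real_inner_self_eq_norm_sq (Q x)]
    ring
  rw [hAx] at hkey
  nlinarith [hkey, hexp2]

/-- convexity of the squared norm along convex combinations -/
lemma aux_norm_sq_comb (u v : E) (a b : ℝ) (ha : 0 ≤ a) (hb : 0 ≤ b) (hab : a + b = 1) :
    ‖a • u + b • v‖ ^ 2 ≤ a * ‖u‖ ^ 2 + b * ‖v‖ ^ 2 := by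
  have h1 : ‖a • u + b • v‖ ≤ a * ‖u‖ + b * ‖v‖ := by
    calc ‖a • u + b • v‖ ≤ ‖a • u‖ + ‖b • v‖ := norm_add_le _ _
      _ = a * ‖u‖ + b * ‖v‖ := by
          rw [norm_smul, norm_smul, Real.norm_of_nonneg ha, Real.norm_of_nonneg hb]
  have h2 : ‖a • u + b • v‖ ^ 2 ≤ (a * ‖u‖ + b * ‖v‖) ^ 2 :=
    pow_le_pow_left₀ (norm_nonneg _) h1 2
  nlinarith [mul_nonneg (mul_nonneg ha hb) (sq_nonneg (‖u‖ - ‖v‖))]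

end Aux


/-- The Moreau envelope `g^γ(z) = inf_y { g(y) + ‖y - z‖²/(2γ) }`. -/
noncomputable def moreau {n : ℕ} (g : EuclideanSpace ℝ (Fin n) → ℝ) (γ : ℝ)
    (z : EuclideanSpace ℝ (Fin n)) : ℝ :=
  ⨅ y : EuclideanSpace ℝ (Fin n), (g y + ‖y - z‖ ^ 2 / (2 * γ))

/-- a finite convex function on Euclidean space has a linear minorant. -/
lemma aux_lin_minorant {n : ℕ} (g : EuclideanSpace ℝ (Fin n) → ℝ)
    (hg : ConvexOn ℝ Set.univ g) :
    ∃ α β : ℝ, 0 ≤ β ∧ ∀ y, α - β * ‖y‖ ≤ g y := by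
  have hcont : Continuous g := by
    exact continuousOn_univ.1 (hg.continuousOn isOpen_univ)
  obtain ⟨u₀, hu₀, hmin⟩ := (isCompact_closedBall (0 : EuclideanSpace ℝ (Fin n)) 1).exists_isMinOn
    ⟨0, by simp⟩ hcont.continuousOn
  set c := g u₀ with hc
  refine ⟨min c (g 0), max (g 0 - c) 0, le_max_right _ _, fun y => ?_⟩
  rcases le_or_gt ‖y‖ 1 with hy | hy
  · have hcy : c ≤ g y := hmin (by simpa [Metric.mem_closedBall] using hy)
    have : min c (g 0) - max (g 0 - c) 0 * ‖y‖ ≤ c := by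
      have h1 : 0 ≤ max (g 0 - c) 0 * ‖y‖ :=
        mul_nonneg (le_max_right _ _) (norm_nonneg _)
      calc min c (g 0) - max (g 0 - c) 0 * ‖y‖ ≤ min c (g 0) := by linarith
        _ ≤ c := min_le_left _ _
    linarith
  · set s := ‖y‖ with hs
    have hs1 : 1 < s := hy
    have hspos : 0 < s := by linarith
    have hunit : (s⁻¹ • y : EuclideanSpace ℝ (Fin n)) ∈ Metric.closedBall
        (0 : EuclideanSpace ℝ (Fin n)) 1 := by
      simp only [Metric.mem_closedBall, dist_zero_right, norm_smul, norm_inv,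
        Real.norm_of_nonneg hspos.le]
      rw [← hs, inv_mul_cancel₀ hspos.ne']
    have hcu : c ≤ g (s⁻¹ • y) := hmin hunit
    have ha' : (0:ℝ) ≤ s⁻¹ := by positivity
    have hb' : (0:ℝ) ≤ 1 - s⁻¹ := by
      rw [sub_nonneg]; exact inv_le_one_of_one_le₀ hs1.le
    have hab' : s⁻¹ + (1 - s⁻¹) = 1 := by ring
    have hconvapp := hg.2 (Set.mem_univ y) (Set.mem_univ (0 : EuclideanSpace ℝ (Fin n)))
      ha' hb' hab'
    simp only [smul_zero, add_zero, smul_eq_mul] at hconvapp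
    -- hconvapp : g (s⁻¹ • y) ≤ s⁻¹ * g y + (1 - s⁻¹) * g 0
    have hgy : s * c - (s - 1) * g 0 ≤ g y := by
      have h4 : s * (s⁻¹ * g y + (1 - s⁻¹) * g 0) = g y + (s - 1) * g 0 := by
        field_simp
      have h5 := mul_le_mul_of_nonneg_left (le_trans hcu hconvapp) hspos.le
      linarith [h4, h5]
    have hβ : g 0 - c ≤ max (g 0 - c) 0 := le_max_left _ _
    have hα : min c (g 0) ≤ g 0 := min_le_right _ _
    have h0 : 0 ≤ max (g 0 - c) 0 := le_max_right _ _
    nlinarith [hgy, mul_le_mul_of_nonneg_left hβ hspos.le, h0, hs1]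

lemma aux_moreau_bdd {n : ℕ} (g : EuclideanSpace ℝ (Fin n) → ℝ) (γ α β : ℝ)
    (hγ : 0 < γ) (hβ : 0 ≤ β) (hlin : ∀ y, α - β * ‖y‖ ≤ g y)
    (z : EuclideanSpace ℝ (Fin n)) :
    ∀ y, α - β * ‖z‖ - γ * β ^ 2 / 2 ≤ g y + ‖y - z‖ ^ 2 / (2 * γ) := by
  intro y
  have h1 : ‖y‖ ≤ ‖y - z‖ + ‖z‖ := by
    calc ‖y‖ = ‖(y - z) + z‖ := by rw [sub_add_cancel]
      _ ≤ ‖y - z‖ + ‖z‖ := norm_add_le _ _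
  have h2 : β * ‖y - z‖ - γ * β ^ 2 / 2 ≤ ‖y - z‖ ^ 2 / (2 * γ) := by
    rw [le_div_iff₀ (by positivity)]
    nlinarith [sq_nonneg (‖y - z‖ - γ * β)]
  have h3 := hlin y
  nlinarith [mul_le_mul_of_nonneg_left h1 hβ]

lemma aux_moreau_comb {n : ℕ} (g : EuclideanSpace ℝ (Fin n) → ℝ) (γ : ℝ) (hγ : 0 < γ)
    (hg : ConvexOn ℝ Set.univ g) (z₁ z₂ : EuclideanSpace ℝ (Fin n)) (a b : ℝ)
    (ha : 0 ≤ a) (hb : 0 ≤ b) (hab : a + b = 1) :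
    moreau g γ (a • z₁ + b • z₂) ≤ a * moreau g γ z₁ + b * moreau g γ z₂ := by
  obtain ⟨α, β, hβ, hlin⟩ := aux_lin_minorant g hg
  have hbdd : ∀ z : EuclideanSpace ℝ (Fin n),
      BddBelow (Set.range fun y => g y + ‖y - z‖ ^ 2 / (2 * γ)) := by
    intro z
    exact ⟨α - β * ‖z‖ - γ * β ^ 2 / 2, by
      rintro v ⟨y, rfl⟩; exact aux_moreau_bdd g γ α β hγ hβ hlin z y⟩
  refine le_of_forall_pos_le_add fun ε hε => ?_
  obtain ⟨y₁, hy₁⟩ := exists_lt_of_ciInf_lt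
    (lt_add_of_pos_right (moreau g γ z₁) hε)
  obtain ⟨y₂, hy₂⟩ := exists_lt_of_ciInf_lt
    (lt_add_of_pos_right (moreau g γ z₂) hε)
  have hle : moreau g γ (a • z₁ + b • z₂)
      ≤ g (a • y₁ + b • y₂) + ‖(a • y₁ + b • y₂) - (a • z₁ + b • z₂)‖ ^ 2 / (2 * γ) :=
    ciInf_le (hbdd _) _
  have hvec : (a • y₁ + b • y₂) - (a • z₁ + b • z₂) = a • (y₁ - z₁) + b • (y₂ - z₂) := by
    simp only [smul_sub]; abel
  have hnorm : ‖(a • y₁ + b • y₂) - (a • z₁ + b • z₂)‖ ^ 2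
      ≤ a * ‖y₁ - z₁‖ ^ 2 + b * ‖y₂ - z₂‖ ^ 2 := by
    rw [hvec]
    exact aux_norm_sq_comb _ _ a b ha hb hab
  have hgc : g (a • y₁ + b • y₂) ≤ a * g y₁ + b * g y₂ := by
    have := hg.2 (Set.mem_univ y₁) (Set.mem_univ y₂) ha hb hab
    simpa using this
  have hdiv : ‖(a • y₁ + b • y₂) - (a • z₁ + b • z₂)‖ ^ 2 / (2 * γ)
      ≤ (a * ‖y₁ - z₁‖ ^ 2 + b * ‖y₂ - z₂‖ ^ 2) / (2 * γ) := by
    apply div_le_div_of_nonneg_right ?_ (by positivity)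
    · exact hnorm
  have e1 : a * (g y₁ + ‖y₁ - z₁‖ ^ 2 / (2 * γ)) ≤ a * (moreau g γ z₁ + ε) :=
    mul_le_mul_of_nonneg_left hy₁.le ha
  have e2 : b * (g y₂ + ‖y₂ - z₂‖ ^ 2 / (2 * γ)) ≤ b * (moreau g γ z₂ + ε) :=
    mul_le_mul_of_nonneg_left hy₂.le hb
  have hsplit : (a * ‖y₁ - z₁‖ ^ 2 + b * ‖y₂ - z₂‖ ^ 2) / (2 * γ)
      = a * (‖y₁ - z₁‖ ^ 2 / (2 * γ)) + b * (‖y₂ - z₂‖ ^ 2 / (2 * γ)) := by ring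
  have hfin : a * (moreau g γ z₁ + ε) + b * (moreau g γ z₂ + ε)
      = a * moreau g γ z₁ + b * moreau g γ z₂ + ε := by
    have : a + b = 1 := hab
    nlinarith [this]
  linarith [hle, hdiv, hgc, e1, e2, hsplit.le, hsplit.ge]

/-- For the quadratic `φ(x) = ½ xᵀQx + qᵀx` with `Q` symmetric with spectrum
in `[m, L]`, `0 < m ≤ L`, `γ ∈ (0, 1/L)`, the forward-backward envelope
`M(x) = φ(x) - (γ/2)‖∇φ(x)‖² + g^γ(x - γ∇φ(x))` is convex; more precisely,
its smooth part is `m(1 - γL)`-strongly convex and the Moreau-envelope part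
composed with the affine map `x ↦ (I - γQ)x - γq` is convex. -/
theorem stmt_18 {n : ℕ}
    (Q : EuclideanSpace ℝ (Fin n) →L[ℝ] EuclideanSpace ℝ (Fin n))
    (q : EuclideanSpace ℝ (Fin n))
    (g : EuclideanSpace ℝ (Fin n) → ℝ)
    (m L γ : ℝ) (hm : 0 < m) (hmL : m ≤ L) (hγ0 : 0 < γ) (hγL : γ < 1 / L)
    (hQ : IsSelfAdjoint Q)
    (hlow : ∀ x, m * ‖x‖ ^ 2 ≤ (inner ℝ x (Q x) : ℝ))
    (hupp : ∀ x, (inner ℝ x (Q x) : ℝ) ≤ L * ‖x‖ ^ 2)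
    (hgconv : ConvexOn ℝ Set.univ g) (hglsc : LowerSemicontinuous g) :
    StrongConvexOn Set.univ (m * (1 - γ * L))
        (fun x => (1 / 2 * (inner ℝ x (Q x) : ℝ) + (inner ℝ q x : ℝ)) -
          γ / 2 * ‖Q x + q‖ ^ 2) ∧
      ConvexOn ℝ Set.univ (fun x => moreau g γ (x - γ • (Q x + q))) ∧
      ConvexOn ℝ Set.univ
        (fun x => (1 / 2 * (inner ℝ x (Q x) : ℝ) + (inner ℝ q x : ℝ)) -
          γ / 2 * ‖Q x + q‖ ^ 2 + moreau g γ (x - γ • (Q x + q))) := by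
  have hsym : ∀ u v : EuclideanSpace ℝ (Fin n), ⟪Q u, v⟫ = ⟪u, Q v⟫ :=
    fun u v => hQ.isSymmetric u v
  have hLpos : 0 < L := lt_of_lt_of_le hm hmL
  have hγL1 : γ * L < 1 := by
    have := (lt_div_iff₀ hLpos).mp hγL; linarith
  have key : ∀ z : EuclideanSpace ℝ (Fin n),
      m * (1 - γ * L) * ‖z‖ ^ 2 ≤ ⟪z, Q z⟫ - γ * ‖Q z‖ ^ 2 := by
    intro z
    have hb := aux_sq_bound Q m L hsym hlow hupp z
    have h1 : 0 ≤ (⟪z, Q z⟫ - m * ‖z‖ ^ 2) * (1 - γ * L) :=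
      mul_nonneg (by linarith [hlow z]) (by linarith)
    have h2 : 0 ≤ (γ * m) * (L * ‖z‖ ^ 2 - ⟪z, Q z⟫) :=
      mul_nonneg (by positivity) (by linarith [hupp z])
    have h3 := mul_le_mul_of_nonneg_left hb hγ0.le
    nlinarith [h1, h2, h3]
  set QQ : EuclideanSpace ℝ (Fin n) →L[ℝ] EuclideanSpace ℝ (Fin n) := Q.comp Q with hQQ
  have hsym2 : ∀ u v : EuclideanSpace ℝ (Fin n), ⟪QQ u, v⟫ = ⟪u, QQ v⟫ := by
    intro u v
    simp only [hQQ, ContinuousLinearMap.comp_apply]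
    rw [hsym, hsym]
  have hFexp : ∀ z : EuclideanSpace ℝ (Fin n),
      ((1:ℝ) / 2 * ⟪z, Q z⟫ + ⟪q, z⟫) - γ / 2 * ‖Q z + q‖ ^ 2
      = 1 / 2 * ⟪z, Q z⟫ - γ / 2 * ⟪z, QQ z⟫ + ⟪q - γ • Q q, z⟫ - γ / 2 * ‖q‖ ^ 2 := by
    intro z
    rw [← real_inner_self_eq_norm_sq (Q z + q), ← real_inner_self_eq_norm_sq q]
    simp only [inner_add_left, inner_add_right, inner_sub_left, real_inner_smul_left,
      hQQ, ContinuousLinearMap.comp_apply]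
    linear_combination (-(γ / 2)) * hsym z (Q z) + (γ / 2) * real_inner_comm q (Q z)
      + (-γ) * hsym z q + (-γ) * real_inner_comm (Q q) z
  have strong1 : StrongConvexOn Set.univ (m * (1 - γ * L))
      (fun x => (1 / 2 * (inner ℝ x (Q x) : ℝ) + (inner ℝ q x : ℝ)) -
        γ / 2 * ‖Q x + q‖ ^ 2) := by
    refine ⟨convex_univ, ?_⟩
    intro x _ y _ a b ha hb hab
    obtain rfl : b = 1 - a := by linarith
    simp only [smul_eq_mul]
    rw [hFexp, hFexp, hFexp, aux_quad_comb Q hsym x y a (1 - a) hab,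
      aux_quad_comb QQ hsym2 x y a (1 - a) hab]
    have hlin : ⟪q - γ • Q q, a • x + (1 - a) • y⟫
        = a * ⟪q - γ • Q q, x⟫ + (1 - a) * ⟪q - γ • Q q, y⟫ := by
      rw [inner_add_right, real_inner_smul_right, real_inner_smul_right]
    rw [hlin]
    have hkd := key (x - y)
    have hb' : (0:ℝ) ≤ 1 - a := hb
    have hW : ⟪x - y, QQ (x - y)⟫ = ‖Q (x - y)‖ ^ 2 := by
      simp only [hQQ, ContinuousLinearMap.comp_apply]
      rw [← hsym, real_inner_self_eq_norm_sq]
    rw [hW]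
    nlinarith [mul_le_mul_of_nonneg_left hkd (mul_nonneg ha hb'), mul_nonneg ha hb']
  have conv2 : ConvexOn ℝ Set.univ (fun x => moreau g γ (x - γ • (Q x + q))) := by
    refine ⟨convex_univ, ?_⟩
    intro x _ y _ a b ha hb hab
    simp only [smul_eq_mul]
    have hT : (a • x + b • y) - γ • (Q (a • x + b • y) + q)
        = a • (x - γ • (Q x + q)) + b • (y - γ • (Q y + q)) := by
      obtain rfl : b = 1 - a := by linarith
      simp only [map_add, map_smul]
      module
    rw [hT]
    exact aux_moreau_comb g γ hγ0 hgconv _ _ a b ha hb hab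
  have hκ : 0 ≤ m * (1 - γ * L) := by nlinarith
  have conv1 : ConvexOn ℝ Set.univ
      (fun x => (1 / 2 * (inner ℝ x (Q x) : ℝ) + (inner ℝ q x : ℝ)) -
        γ / 2 * ‖Q x + q‖ ^ 2) := by
    have hle : (0 : ℝ → ℝ) ≤ fun r => (m * (1 - γ * L)) / 2 * r ^ 2 :=
      fun r => mul_nonneg (by linarith) (sq_nonneg r)
    exact uniformConvexOn_zero.mp (UniformConvexOn.mono hle strong1)
  exact ⟨strong1, conv2, conv1.add conv2⟩
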